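/- Let K be a field, n ≥ 1, and G a group. Let I_Σ(KG) be the two-sided ideal of KG generated by all products (a₁b₁−b₁a₁)(a₂b₂−b₂a₂)⋯(aₙbₙ−bₙaₙ) with a₁,b₁,…,aₙ,bₙ ∈ KG, and let D_Σ(G) = {g ∈ G : g − 1 ∈ I_Σ(KG)} (a normal subgroup of G). Then the quotient group G/D_Σ(G) belongs to the variety 𝔑_{n−1}·𝔄: the derived subgroup of G/D_Σ(G) is nilpotent of nilpotency class at most n−1 (equivalently, G/D_Σ(G) has a normal subgroup that is nilpotent of class at most n−1 with abelian quotient). -/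

import Mathlib

open scoped commutatorElement


namespace DimSub18

variable (K : Type) [Field K] (G : Type) [Group G]

/-- The span of products `c * (∏ [aᵢ,bᵢ]) * d` with `k` bracket factors. -/
noncomputable def Ik (k : ℕ) : Submodule K (MonoidAlgebra K G) :=
  Submodule.span K
    {x : MonoidAlgebra K G | ∃ a b : Fin k → MonoidAlgebra K G, ∃ c d : MonoidAlgebra K G,
      x = c * (List.ofFn fun i => a i * b i - b i * a i).prod * d}

variable {K G}

lemma left_mul_mem {k : ℕ} (z : MonoidAlgebra K G) {x : MonoidAlgebra K G}
    (hx : x ∈ Ik K G k) : z * x ∈ Ik K G k := by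
  refine Submodule.span_induction (fun y hy => ?_) (by simp) (fun u v _ _ hu hv => ?_)
    (fun r u _ hu => ?_) hx
  · obtain ⟨a, b, c, d, rfl⟩ := hy
    exact Submodule.subset_span ⟨a, b, z * c, d, by noncomm_ring⟩
  · rw [mul_add]; exact add_mem hu hv
  · rw [mul_smul_comm]; exact Submodule.smul_mem _ _ hu

lemma right_mul_mem {k : ℕ} (z : MonoidAlgebra K G) {x : MonoidAlgebra K G}
    (hx : x ∈ Ik K G k) : x * z ∈ Ik K G k := by
  refine Submodule.span_induction (fun y hy => ?_) (by simp) (fun u v _ _ hu hv => ?_)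
    (fun r u _ hu => ?_) hx
  · obtain ⟨a, b, c, d, rfl⟩ := hy
    exact Submodule.subset_span ⟨a, b, c, d * z, by noncomm_ring⟩
  · rw [add_mul]; exact add_mem hu hv
  · rw [smul_mul_assoc]; exact Submodule.smul_mem _ _ hu

/-- Key absorption lemma: `z * (∏ [aᵢ,bᵢ])` is in the span of `(∏ brackets) * d`. -/
lemma mul_bracket_prod_mem :
    ∀ (k : ℕ) (z : MonoidAlgebra K G) (a b : Fin k → MonoidAlgebra K G),
    z * (List.ofFn fun i => a i * b i - b i * a i).prod ∈
      Submodule.span K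
        {x : MonoidAlgebra K G | ∃ a' b' : Fin k → MonoidAlgebra K G,
          ∃ d : MonoidAlgebra K G,
          x = (List.ofFn fun i => a' i * b' i - b' i * a' i).prod * d} := by
  intro k
  induction k with
  | zero =>
    intro z a b
    exact Submodule.subset_span ⟨a, b, z, by simp⟩
  | succ k ih =>
    intro z a b
    rw [List.ofFn_succ, List.prod_cons]
    have key : z * ((a 0 * b 0 - b 0 * a 0) *
          (List.ofFn fun i : Fin k => a i.succ * b i.succ - b i.succ * a i.succ).prod)
        = ((z * a 0) * b 0 - b 0 * (z * a 0)) *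
            (List.ofFn fun i : Fin k => a i.succ * b i.succ - b i.succ * a i.succ).prod
          - (z * b 0 - b 0 * z) *
            (a 0 * (List.ofFn fun i : Fin k => a i.succ * b i.succ - b i.succ * a i.succ).prod) := by
      noncomm_ring
    rw [key]
    refine sub_mem ?_ ?_
    · refine Submodule.subset_span
        ⟨Fin.cons (z * a 0) (fun i => a i.succ), Fin.cons (b 0) (fun i => b i.succ), 1, ?_⟩
      rw [List.ofFn_succ, List.prod_cons]
      simp [Fin.cons_succ]
    · have h2 := ih (a 0) (fun i => a i.succ) (fun i => b i.succ)
      refine Submodule.span_induction (fun y hy => ?_) (by simp) (fun u v _ _ hu hv => ?_)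
        (fun r u _ hu => ?_) h2
      · obtain ⟨a', b', d, rfl⟩ := hy
        refine Submodule.subset_span ⟨Fin.cons z (a'), Fin.cons (b 0) (b'), d, ?_⟩
        rw [List.ofFn_succ, List.prod_cons]
        simp [Fin.cons_succ, mul_assoc]
      · rw [mul_add]; exact add_mem hu hv
      · rw [mul_smul_comm]; exact Submodule.smul_mem _ _ hu

lemma prod_append_eq {k m : ℕ} (a b : Fin k → MonoidAlgebra K G)
    (a' b' : Fin m → MonoidAlgebra K G) :
    (List.ofFn fun i : Fin (k + m) =>
        (Fin.addCases a a' i) * (Fin.addCases b b' i)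
          - (Fin.addCases b b' i) * (Fin.addCases a a' i)).prod
      = (List.ofFn fun i => a i * b i - b i * a i).prod
        * (List.ofFn fun i => a' i * b' i - b' i * a' i).prod := by
  rw [List.ofFn_add, List.prod_append]
  congr 1 <;> refine congrArg List.prod (congrArg List.ofFn (funext fun i => ?_)) <;>
    simp [show ∀ j : Fin k, j.castLE (Nat.le_add_right k m) = Fin.castAdd m j from fun _ => rfl]

lemma mul_mem_Ik_add {k m : ℕ} {x y : MonoidAlgebra K G}
    (hx : x ∈ Ik K G k) (hy : y ∈ Ik K G m) : x * y ∈ Ik K G (k + m) := by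
  refine Submodule.span_induction (fun u hu => ?_) (by simp) (fun u v _ _ hu hv => ?_)
    (fun r u _ hu => ?_) hx
  · obtain ⟨a, b, c, d, rfl⟩ := hu
    refine Submodule.span_induction (fun v hv => ?_) (by simp) (fun u v _ _ hu hv => ?_)
      (fun r v _ hv => ?_) hy
    · obtain ⟨a', b', c', d', rfl⟩ := hv
      have h := mul_bracket_prod_mem m (d * c') a' b'
      have habs : ∀ w ∈ Submodule.span K
          {x : MonoidAlgebra K G | ∃ a'' b'' : Fin m → MonoidAlgebra K G,
            ∃ e : MonoidAlgebra K G,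
            x = (List.ofFn fun i => a'' i * b'' i - b'' i * a'' i).prod * e},
          c * (List.ofFn fun i => a i * b i - b i * a i).prod * w * d' ∈ Ik K G (k + m) := by
        intro w hw
        refine Submodule.span_induction (fun u hu => ?_) (by simp) (fun u v _ _ hu hv => ?_)
          (fun r u _ hu => ?_) hw
        · obtain ⟨a'', b'', e, rfl⟩ := hu
          refine Submodule.subset_span
            ⟨Fin.addCases a a'', Fin.addCases b b'', c, e * d', ?_⟩
          rw [prod_append_eq]
          noncomm_ring
        · rw [mul_add, add_mul]; exact add_mem hu hv
        · rw [mul_smul_comm, smul_mul_assoc]; exact Submodule.smul_mem _ _ hu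
      have := habs _ h
      have heq : c * (List.ofFn fun i => a i * b i - b i * a i).prod
            * (d * c' * (List.ofFn fun i => a' i * b' i - b' i * a' i).prod) * d'
          = c * (List.ofFn fun i => a i * b i - b i * a i).prod * d
            * (c' * (List.ofFn fun i => a' i * b' i - b' i * a' i).prod * d') := by
        noncomm_ring
      rw [← heq]; exact this
    · rw [mul_add]; exact add_mem hu hv
    · rw [mul_smul_comm]; exact Submodule.smul_mem _ _ hv
  · rw [add_mul]; exact add_mem hu hv
  · rw [smul_mul_assoc]; exact Submodule.smul_mem _ _ hu

lemma Ik_add_le (k m : ℕ) : Ik K G (k + m) ≤ Ik K G k := by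
  rw [Ik, Submodule.span_le]
  rintro x ⟨a, b, c, d, rfl⟩
  have : c * (List.ofFn fun i : Fin (k + m) => a i * b i - b i * a i).prod * d
      = c * (List.ofFn fun i : Fin k =>
            a (Fin.castAdd m i) * b (Fin.castAdd m i)
              - b (Fin.castAdd m i) * a (Fin.castAdd m i)).prod
        * ((List.ofFn fun i : Fin m =>
            a (Fin.natAdd k i) * b (Fin.natAdd k i)
              - b (Fin.natAdd k i) * a (Fin.natAdd k i)).prod * d) := by
    rw [List.ofFn_add, List.prod_append]; noncomm_ring
  rw [this]
  exact Submodule.subset_span ⟨_, _, c, _, rfl⟩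

variable (K G)

/-- The dimension subgroup of `Ik`. -/
def Dk (k : ℕ) : Subgroup G where
  carrier := {g : G | MonoidAlgebra.of K G g - 1 ∈ Ik K G k}
  one_mem' := by
    show MonoidAlgebra.of K G 1 - 1 ∈ Ik K G _
    rw [map_one, sub_self]; exact zero_mem _
  mul_mem' := by
    intro g h hg hh
    show MonoidAlgebra.of K G (g * h) - 1 ∈ Ik K G _
    have : MonoidAlgebra.of K G (g * h) - 1
        = (MonoidAlgebra.of K G g - 1) * MonoidAlgebra.of K G h
          + (MonoidAlgebra.of K G h - 1) := by
      rw [map_mul]; noncomm_ring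
    rw [this]
    exact add_mem (right_mul_mem _ hg) hh
  inv_mem' := by
    intro g hg
    show MonoidAlgebra.of K G g⁻¹ - 1 ∈ Ik K G _
    have h1 : MonoidAlgebra.of K G g⁻¹ * MonoidAlgebra.of K G g = 1 := by
      rw [← map_mul, inv_mul_cancel, map_one]
    have : MonoidAlgebra.of K G g⁻¹ - 1
        = (- MonoidAlgebra.of K G g⁻¹) * (MonoidAlgebra.of K G g - 1) := by
      rw [neg_mul, mul_sub, h1, mul_one, neg_sub]
    rw [this]
    exact left_mul_mem _ hg

lemma Dk_normal (k : ℕ) : (Dk K G k).Normal := by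
  constructor
  intro g hg h
  show MonoidAlgebra.of K G (h * g * h⁻¹) - 1 ∈ Ik K G k
  have h1 : MonoidAlgebra.of K G h * MonoidAlgebra.of K G h⁻¹ = 1 := by
    rw [← map_mul, mul_inv_cancel, map_one]
  have : MonoidAlgebra.of K G (h * g * h⁻¹) - 1
      = MonoidAlgebra.of K G h * (MonoidAlgebra.of K G g - 1) * MonoidAlgebra.of K G h⁻¹ := by
    rw [map_mul, map_mul, mul_sub, mul_one, sub_mul, h1]
  rw [this]
  exact right_mul_mem _ (left_mul_mem _ hg)

variable {K G}

lemma commutator_sub_one (g h : G) :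
    MonoidAlgebra.of K G ⁅g, h⁆ - 1
      = ((MonoidAlgebra.of K G g - 1) * (MonoidAlgebra.of K G h - 1)
          - (MonoidAlgebra.of K G h - 1) * (MonoidAlgebra.of K G g - 1))
        * MonoidAlgebra.of K G (h * g)⁻¹ := by
  have e1 : MonoidAlgebra.of K G g * MonoidAlgebra.of K G h * MonoidAlgebra.of K G (h * g)⁻¹
      = MonoidAlgebra.of K G ⁅g, h⁆ := by
    rw [← map_mul, ← map_mul]; congr 1; group
  have e2 : MonoidAlgebra.of K G h * MonoidAlgebra.of K G g * MonoidAlgebra.of K G (h * g)⁻¹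
      = 1 := by
    rw [← map_mul, ← map_mul, mul_inv_cancel, map_one]
  have expand : ((MonoidAlgebra.of K G g - 1) * (MonoidAlgebra.of K G h - 1)
          - (MonoidAlgebra.of K G h - 1) * (MonoidAlgebra.of K G g - 1))
        * MonoidAlgebra.of K G (h * g)⁻¹
      = MonoidAlgebra.of K G g * MonoidAlgebra.of K G h * MonoidAlgebra.of K G (h * g)⁻¹
        - MonoidAlgebra.of K G h * MonoidAlgebra.of K G g * MonoidAlgebra.of K G (h * g)⁻¹ := by
    noncomm_ring
  rw [expand, e1, e2]

lemma comm_mem_Dk_add {k m : ℕ} {g h : G} (hg : g ∈ Dk K G k) (hh : h ∈ Dk K G m) :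
    ⁅g, h⁆ ∈ Dk K G (k + m) := by
  show MonoidAlgebra.of K G ⁅g, h⁆ - 1 ∈ Ik K G (k + m)
  rw [commutator_sub_one]
  refine right_mul_mem _ (sub_mem (mul_mem_Ik_add hg hh) ?_)
  have := mul_mem_Ik_add hh hg
  rwa [Nat.add_comm m k] at this

lemma comm_mem_Dk_one (g h : G) : ⁅g, h⁆ ∈ Dk K G 1 := by
  show MonoidAlgebra.of K G ⁅g, h⁆ - 1 ∈ Ik K G 1
  rw [commutator_sub_one]
  refine Submodule.subset_span
    ⟨fun _ => MonoidAlgebra.of K G g - 1, fun _ => MonoidAlgebra.of K G h - 1,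
      1, MonoidAlgebra.of K G (h * g)⁻¹, ?_⟩
  simp [List.ofFn_succ]

end DimSub18

/-- let `K` be a field, `n ≥ 1`, `G` a group, `I_Σ(KG)` the two-sided ideal
of `KG` generated by all products `(a₁b₁-b₁a₁)⋯(aₙbₙ-bₙaₙ)` (the verbal ideal of the
variety `Σ` of algebras with nilpotent derived ideal of class `n`), and
`D_Σ(G) = {g : g - 1 ∈ I_Σ(KG)}` the corresponding dimension subgroup. Then `D_Σ(G)` is a
normal subgroup and `G/D_Σ(G)` lies in `𝔑_{n-1}·𝔄`: its derived subgroup is nilpotent of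
class at most `n - 1`. -/
theorem quotient_by_dimension_subgroup_in_NA (K : Type) [Field K] (n : ℕ) (hn : 1 ≤ n)
    (G : Type) [Group G] :
    let ISigma : Submodule K (MonoidAlgebra K G) := Submodule.span K
      {x : MonoidAlgebra K G | ∃ a b : Fin n → MonoidAlgebra K G, ∃ c d : MonoidAlgebra K G,
        x = c * (List.ofFn fun i => a i * b i - b i * a i).prod * d}
    ∃ D : Subgroup G, (∀ g : G, g ∈ D ↔ MonoidAlgebra.of K G g - 1 ∈ ISigma) ∧
      ∃ hD : D.Normal,
        letI := hD
        Subgroup.lowerCentralSeries (⊤ : Subgroup ↥(commutator (G ⧸ D))) (n - 1) = ⊥ := by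
  intro ISigma
  refine ⟨DimSub18.Dk K G n, fun g => Iff.rfl, DimSub18.Dk_normal K G n, ?_⟩
  letI := DimSub18.Dk_normal K G n
  set D := DimSub18.Dk K G n with hD
  set Q := G ⧸ D
  set π := QuotientGroup.mk' D with hπ
  set E : ℕ → Subgroup Q := fun k => (DimSub18.Dk K G k).map π with hE
  -- commutator of the quotient lands in E 1
  have h1 : commutator Q ≤ E 1 := by
    rw [commutator_def]
    have htop : (⊤ : Subgroup Q) = Subgroup.map π ⊤ :=
      (Subgroup.map_top_of_surjective π (QuotientGroup.mk'_surjective D)).symm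
    rw [htop, ← Subgroup.map_commutator]
    refine Subgroup.map_mono ?_
    rw [Subgroup.commutator_le]
    intro g _ h _
    exact DimSub18.comm_mem_Dk_one g h
  -- commutator step
  have hstep : ∀ j : ℕ, ∀ x ∈ E (j + 1), ∀ y ∈ E 1, ⁅x, y⁆ ∈ E (j + 2) := by
    intro j x hx y hy
    obtain ⟨g, hg, rfl⟩ := hx
    obtain ⟨h, hh, rfl⟩ := hy
    have hg' : g ∈ DimSub18.Dk K G (j + 1) := hg
    have hh' : h ∈ DimSub18.Dk K G 1 := hh
    have : ⁅π g, π h⁆ = π ⁅g, h⁆ := (map_commutatorElement π g h).symm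
    rw [this]
    have hc : ⁅g, h⁆ ∈ DimSub18.Dk K G (j + 1 + 1) := DimSub18.comm_mem_Dk_add hg' hh'
    exact ⟨⁅g, h⁆, hc, rfl⟩
  -- main induction
  set H := commutator Q with hH
  have claim : ∀ j : ℕ, Subgroup.lowerCentralSeries (⊤ : Subgroup ↥H) j ≤ (E (j + 1)).comap H.subtype := by
    intro j
    induction j with
    | zero =>
      intro x _
      exact h1 x.2
    | succ j ih =>
      rw [Subgroup.lowerCentralSeries_succ, Subgroup.commutator_def]
      refine (Subgroup.closure_le _).2 ?_
      rintro x ⟨p, hp, q, hq, rfl⟩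
      have hca : (p : Q) ∈ E (j + 1) := ih hp
      have hcb : (q : Q) ∈ E 1 := h1 q.2
      have hco : H.subtype ⁅p, q⁆ = ⁅(p : Q), (q : Q)⁆ :=
        map_commutatorElement H.subtype p q
      rw [SetLike.mem_coe, Subgroup.mem_comap, hco]
      exact hstep j _ hca _ hcb
  -- conclude
  rw [eq_bot_iff]
  intro x hx
  have hmem := claim (n - 1) hx
  rw [Subgroup.mem_comap] at hmem
  have hn1 : n - 1 + 1 = n := Nat.succ_pred_eq_of_pos hn
  rw [hn1] at hmem
  obtain ⟨g, hg, hgx⟩ := hmem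
  have hone : π g = 1 := (QuotientGroup.eq_one_iff g).mpr hg
  have : (x : Q) = 1 := by
    have : H.subtype x = (x : Q) := rfl
    rw [← this, ← hgx, hone]
  rw [Subgroup.mem_bot]
  exact Subtype.ext this
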